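/- Let H = K_{n,n} − M be the complete bipartite graph with a perfect matching removed. The total number of proper partitions of the vertex set of H into independent sets equals the sum over k = 0 to n of C(n,k)·B(k)^2, where B(k) is the k-th Bell number (with B(0) = 1). -/

import Mathlib

/-- Stirling numbers of the second kind. -/
def stirling : ℕ → ℕ → ℕ
  | 0, 0 => 1
  | 0, _ + 1 => 0
  | _ + 1, 0 => 0
  | n + 1, k + 1 => (k + 1) * stirling n (k + 1) + stirling n k

/-- The classical Bell numbers. -/
def bell (n : ℕ) : ℕ := ∑ k ∈ Finset.range (n + 1), stirling n k

open Finset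

lemma bell_zero' : bell 0 = 1 := rfl
lemma stirling_succ_zero (n : ℕ) : stirling (n+1) 0 = 0 := rfl

lemma stirling_succ (n k : ℕ) :
    stirling (n+1) (k+1) = (k + 1) * stirling n (k + 1) + stirling n k := rfl

lemma stirling_eq_zero {n k : ℕ} (h : n < k) : stirling n k = 0 := by
  induction n generalizing k with
  | zero =>
    match k, h with
    | k + 1, _ => rfl
  | succ n ih =>
    match k, h with
    | k + 1, h =>
      rw [stirling_succ, ih (by omega), ih (by omega)]; simp

lemma stirling_succ_succ (n k : ℕ) :
    stirling (n+1) (k+1) = ∑ j ∈ Finset.range (n+1), n.choose j * stirling j k := by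
  induction n generalizing k with
  | zero => simp [stirling]
  | succ n ih =>
    have key : ∑ j ∈ Finset.range (n+2), n.choose j * stirling j k
        = stirling (n+1) (k+1) := by
      rw [Finset.sum_range_succ, Nat.choose_eq_zero_of_lt (by omega), ← ih]; simp
    have expand : ∑ j ∈ Finset.range (n+2), (n+1).choose j * stirling j k
        = (∑ j ∈ Finset.range (n+1), n.choose j * stirling (j+1) k)
          + ∑ j ∈ Finset.range (n+2), n.choose j * stirling j k := by
      rw [Finset.sum_range_succ' (fun j => (n+1).choose j * stirling j k),
          Finset.sum_range_succ' (fun j => n.choose j * stirling j k)]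
      simp only [Nat.choose_succ_succ, Nat.add_mul, Finset.sum_add_distrib]
      simp [Nat.choose_zero_right]
      ring
    have A : ∑ j ∈ Finset.range (n+1), n.choose j * stirling (j+1) k
        = k * stirling (n+1) (k+1) + stirling (n+1) k := by
      cases k with
      | zero =>
        simp [stirling_succ_zero]
      | succ k =>
        have step : ∀ j ∈ Finset.range (n+1), n.choose j * stirling (j+1) (k+1)
            = (k+1) * (n.choose j * stirling j (k+1)) + n.choose j * stirling j k := by
          intro j _; rw [stirling_succ]; ring
        rw [Finset.sum_congr rfl step, Finset.sum_add_distrib, ← Finset.mul_sum, ← ih, ← ih,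
          stirling_succ]
    rw [expand, key, A, stirling_succ]
    ring

lemma bell_succ (n : ℕ) :
    bell (n+1) = ∑ k ∈ Finset.range (n+1), n.choose k * bell k := by
  have hb : ∀ j ∈ Finset.range (n+1), n.choose j * bell j
      = n.choose j * ∑ k ∈ Finset.range (n+1), stirling j k := by
    intro j hj
    simp only [Finset.mem_range] at hj
    congr 1
    unfold bell
    rw [← Finset.sum_range_add_sum_Ico _ (show j+1 ≤ n+1 by omega)]
    rw [Finset.sum_eq_zero (fun k hk => stirling_eq_zero (Finset.mem_Ico.1 hk).1)]
    simp
  rw [Finset.sum_congr rfl hb]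
  unfold bell
  rw [Finset.sum_range_succ' (fun k => stirling (n+1) k), stirling_succ_zero]
  simp only [stirling_succ_succ]
  rw [Finset.sum_comm]
  simp [Finset.mul_sum]

noncomputable instance finpartitionFintype {α : Type*} [Fintype α] [DecidableEq α]
    (s : Finset α) : Fintype (Finpartition s) :=
  Fintype.ofInjective Finpartition.parts (fun _ _ h => Finpartition.ext h)

lemma avoid_parts_of_mem {α : Type*} [DecidableEq α] {s : Finset α} (P : Finpartition s)
    {b : Finset α} (hb : b ∈ P.parts) : (P.avoid b).parts = P.parts.erase b := by
  ext c
  rw [Finpartition.mem_avoid, mem_erase]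
  constructor
  · rintro ⟨d, hd, hdb, rfl⟩
    have hne : d ≠ b := by rintro rfl; exact hdb le_rfl
    have : Disjoint d b := P.disjoint hd hb hne
    rw [sdiff_eq_self_of_disjoint this]
    exact ⟨hne, hd⟩
  · rintro ⟨hne, hc⟩
    refine ⟨c, hc, ?_, sdiff_eq_self_of_disjoint (P.disjoint hc hb hne)⟩
    intro hle
    obtain ⟨x, hx⟩ := P.nonempty_of_mem_parts hc
    exact (Finset.disjoint_left.1 (P.disjoint hc hb hne)) hx (hle hx)

private lemma sigma_finpartition_eq {α : Type*} [DecidableEq α] {β : Type*} {f : β → Finset α}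
    {x y : Σ b : β, Finpartition (f b)} (h1 : x.1 = y.1) (h2 : x.2.parts = y.2.parts) : x = y := by
  obtain ⟨b, P⟩ := x; obtain ⟨c, Q⟩ := y
  cases h1
  cases Finpartition.ext h2
  rfl

variable {α : Type*} [DecidableEq α]

/-- Forward map: extract the rest of the part of `a`, and the partition of the rest. -/
def fpFwd (s : Finset α) (a : α) (ha : a ∈ s) (P : Finpartition s) :
    Σ t : {t : Finset α // t ∈ (s.erase a).powerset}, Finpartition ((s.erase a) \ t.1) :=
  ⟨⟨(P.part a).erase a, mem_powerset.2 (erase_subset_erase a (P.le (P.part_mem.2 ha)))⟩,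
    (P.avoid (P.part a)).copy (by
      have hpa : a ∈ P.part a := P.mem_part ha
      ext x
      simp only [mem_sdiff, mem_erase]
      constructor
      · rintro ⟨hx, hnx⟩
        have hxa : x ≠ a := by rintro rfl; exact hnx hpa
        exact ⟨⟨hxa, hx⟩, fun h => hnx h.2⟩
      · rintro ⟨⟨hxa, hx⟩, hnx⟩
        exact ⟨hx, fun h => hnx ⟨hxa, h⟩⟩)⟩

@[simp] lemma fpFwd_fst (s : Finset α) (a : α) (ha : a ∈ s) (P : Finpartition s) :
    (fpFwd s a ha P).1.1 = (P.part a).erase a := rfl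

@[simp] lemma fpFwd_snd_parts (s : Finset α) (a : α) (ha : a ∈ s) (P : Finpartition s) :
    (fpFwd s a ha P).2.parts = (P.avoid (P.part a)).parts := rfl

lemma fpBack_ne_bot (s : Finset α) (a : α) (t : Finset α) :
    (insert a t : Finset α) ≠ ⊥ := by simp

lemma fpBack_disj (s : Finset α) (a : α) (t : Finset α) :
    Disjoint ((s.erase a) \ t) (insert a t) := by
  rw [Finset.disjoint_insert_right]
  exact ⟨by simp, sdiff_disjoint⟩

lemma fpBack_sup (s : Finset α) (a : α) (ha : a ∈ s) (t : Finset α)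
    (ht : t ∈ (s.erase a).powerset) : ((s.erase a) \ t) ⊔ insert a t = s := by
  have ht' := mem_powerset.1 ht
  rw [sup_eq_union]
  ext x
  simp only [mem_union, mem_sdiff, mem_insert, mem_erase]
  constructor
  · rintro (⟨⟨hxa, hx⟩, _⟩ | rfl | hx)
    · exact hx
    · exact ha
    · exact (mem_erase.1 (ht' hx)).2
  · intro hx
    by_cases hxa : x = a
    · exact Or.inr (Or.inl hxa)
    · by_cases hxt : x ∈ t
      · exact Or.inr (Or.inr hxt)
      · exact Or.inl ⟨⟨hxa, hx⟩, hxt⟩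

lemma fpFwd_back (s : Finset α) (a : α) (ha : a ∈ s)
    (t : {t : Finset α // t ∈ (s.erase a).powerset}) (Q : Finpartition ((s.erase a) \ t.1))
    (hb : (insert a t.1 : Finset α) ≠ ⊥) (hab : Disjoint ((s.erase a) \ t.1) (insert a t.1))
    (hc : ((s.erase a) \ t.1) ⊔ insert a t.1 = s) :
    fpFwd s a ha (Q.extend hb hab hc) = ⟨t, Q⟩ := by
  obtain ⟨t, ht⟩ := t
  have hta : a ∉ t := fun h => (mem_erase.1 (mem_powerset.1 ht h)).1 rfl
  set P := Q.extend hb hab hc with hP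
  have hmem : insert a t ∈ P.parts := mem_insert_self _ _
  have hpart : P.part a = insert a t := P.part_eq_of_mem hmem (mem_insert_self a t)
  have hQnot : insert a t ∉ Q.parts := by
    intro h
    have := Q.le h (mem_insert_self a t)
    simp at this
  refine sigma_finpartition_eq (Subtype.ext ?_) ?_
  · rw [fpFwd_fst, hpart, erase_insert hta]
  · rw [fpFwd_snd_parts, avoid_parts_of_mem P (P.part_mem.2 ha), hpart, hP,
      Finpartition.extend_parts]
    exact erase_insert hQnot

noncomputable def finpartitionEquiv (s : Finset α) (a : α) (ha : a ∈ s) :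
    Finpartition s ≃ Σ t : {t : Finset α // t ∈ (s.erase a).powerset},
      Finpartition ((s.erase a) \ t.1) where
  toFun := fpFwd s a ha
  invFun x := x.2.extend (fpBack_ne_bot s a x.1.1) (fpBack_disj s a x.1.1)
    (fpBack_sup s a ha x.1.1 x.1.2)
  left_inv P := by
    have hpa : a ∈ P.part a := P.mem_part ha
    apply Finpartition.ext
    rw [Finpartition.extend_parts, fpFwd_snd_parts, fpFwd_fst,
      avoid_parts_of_mem P (P.part_mem.2 ha), insert_erase hpa,
      insert_erase (P.part_mem.2 ha)]
  right_inv x := fpFwd_back s a ha x.1 x.2 _ _ _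

theorem card_finpartition_aux (N : ℕ) {α : Type*} [Fintype α] [DecidableEq α] (s : Finset α)
    (hN : s.card ≤ N) : Nat.card (Finpartition s) = bell s.card := by
  induction N generalizing α s with
  | zero =>
    obtain rfl : s = ∅ := Finset.card_eq_zero.1 (by omega)
    simp only [card_empty]
    rw [bell_zero']
    exact Nat.card_unique (α := Finpartition (⊥ : Finset α))
  | succ N ih =>
  rcases s.eq_empty_or_nonempty with rfl | ⟨a, ha⟩
  · simp only [card_empty]
    rw [bell_zero']
    exact Nat.card_unique (α := Finpartition (⊥ : Finset α))
  · have hcard : ∀ t ∈ (s.erase a).powerset,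
        Nat.card (Finpartition ((s.erase a) \ t)) = bell ((s.erase a \ t).card) := by
      intro t ht
      refine ih _ ?_
      have h1 : (s.erase a \ t).card ≤ (s.erase a).card := card_le_card (sdiff_subset)
      have h2 : (s.erase a).card < s.card := card_erase_lt_of_mem ha
      omega
    rw [Nat.card_congr (finpartitionEquiv s a ha)]
    rw [Nat.card_eq_fintype_card, Fintype.card_sigma]
    have : ∀ t : {t : Finset α // t ∈ (s.erase a).powerset},
        Fintype.card (Finpartition ((s.erase a) \ t.1)) = bell ((s.erase a).card - t.1.card) := by
      intro t
      rw [← Nat.card_eq_fintype_card, hcard t.1 t.2,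
        card_sdiff_of_subset (mem_powerset.1 t.2)]
    rw [Finset.sum_congr rfl (fun t _ => this t)]
    rw [Finset.sum_coe_sort ((s.erase a).powerset) (fun t => bell ((s.erase a).card - t.card))]
    rw [Finset.sum_powerset_apply_card (fun m => bell ((s.erase a).card - m))]
    have hm : (s.erase a).card = s.card - 1 := card_erase_of_mem ha
    obtain ⟨m, hm'⟩ : ∃ m, s.card = m + 1 :=
      ⟨s.card - 1, by have := card_pos.2 ⟨a, ha⟩; omega⟩
    rw [hm', bell_succ]
    rw [hm, hm']
    simp only [Nat.add_sub_cancel, smul_eq_mul]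
    rw [← Finset.sum_range_reflect]
    refine Finset.sum_congr rfl fun j hj => ?_
    rw [Finset.mem_range] at hj
    have h1 : m + 1 - 1 - j = m - j := by omega
    rw [h1, Nat.choose_symm (by omega), show m - (m - j) = j by omega]

theorem card_finpartition {α : Type*} [Fintype α] [DecidableEq α] (s : Finset α) :
    Nat.card (Finpartition s) = bell s.card :=
  card_finpartition_aux s.card s le_rfl

/-- The complete bipartite graph `K_{n,n}` with a perfect matching removed. -/
def bipartiteMinusMatching (n : ℕ) : SimpleGraph (Fin n ⊕ Fin n) :=
  SimpleGraph.fromRel (fun x y =>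
    match x, y with
    | Sum.inl i, Sum.inr j => i ≠ j
    | _, _ => False)

variable {n : ℕ}

lemma bmm_adj_inl_inl (i j : Fin n) : ¬ (bipartiteMinusMatching n).Adj (Sum.inl i) (Sum.inl j) := by
  rintro ⟨hne, h | h⟩ <;> exact h

lemma bmm_adj_inr_inr (i j : Fin n) : ¬ (bipartiteMinusMatching n).Adj (Sum.inr i) (Sum.inr j) := by
  rintro ⟨hne, h | h⟩ <;> exact h

lemma bmm_adj_inl_inr (i j : Fin n) :
    (bipartiteMinusMatching n).Adj (Sum.inl i) (Sum.inr j) ↔ i ≠ j := by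
  constructor
  · rintro ⟨hne, h | h⟩
    · exact h
    · exact h.elim
  · intro h
    exact ⟨by simp, Or.inl h⟩

/-- The independence condition on parts. -/
def IndepParts (P : Finpartition (Finset.univ : Finset (Fin n ⊕ Fin n))) : Prop :=
  ∀ p ∈ P.parts, ∀ a ∈ p, ∀ b ∈ p, ¬ (bipartiteMinusMatching n).Adj a b

def pairPart (i : Fin n) : Finset (Fin n ⊕ Fin n) := {Sum.inl i, Sum.inr i}

lemma mem_pairPart {i : Fin n} {x : Fin n ⊕ Fin n} :
    x ∈ pairPart i ↔ x = Sum.inl i ∨ x = Sum.inr i := by simp [pairPart]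

lemma indep_key {P : Finpartition (Finset.univ : Finset (Fin n ⊕ Fin n))} (hP : IndepParts P)
    {p : Finset (Fin n ⊕ Fin n)} (hp : p ∈ P.parts) {i j : Fin n}
    (hi : Sum.inl i ∈ p) (hj : Sum.inr j ∈ p) : i = j := by
  by_contra h
  exact hP p hp _ hi _ hj ((bmm_adj_inl_inr i j).2 h)

/-- Classification of independent parts. -/
lemma part_classify {P : Finpartition (Finset.univ : Finset (Fin n ⊕ Fin n))} (hP : IndepParts P)
    {p : Finset (Fin n ⊕ Fin n)} (hp : p ∈ P.parts) :
    (∀ x ∈ p, x.isLeft) ∨ (∀ x ∈ p, x.isRight) ∨ ∃ i, p = pairPart i := by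
  by_cases hl : ∀ x ∈ p, x.isLeft
  · exact Or.inl hl
  by_cases hr : ∀ x ∈ p, x.isRight
  · exact Or.inr (Or.inl hr)
  push_neg at hl hr
  obtain ⟨x, hx, hxl⟩ := hl
  obtain ⟨y, hy, hyr⟩ := hr
  obtain ⟨j, rfl⟩ : ∃ j, x = Sum.inr j := by cases x <;> simp_all
  obtain ⟨i, rfl⟩ : ∃ i, y = Sum.inl i := by cases y <;> simp_all
  obtain rfl : i = j := indep_key hP hp hy hx
  refine Or.inr (Or.inr ⟨i, ?_⟩)
  ext z
  rw [mem_pairPart]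
  constructor
  · intro hz
    cases z with
    | inl k => exact Or.inl (by rw [indep_key hP hp hz hx])
    | inr k => exact Or.inr (by rw [← indep_key hP hp hy hz])
  · rintro (rfl | rfl)
    · exact hy
    · exact hx

def kSet (P : Finpartition (Finset.univ : Finset (Fin n ⊕ Fin n))) : Finset (Fin n) :=
  univ.filter (fun i => P.part (Sum.inl i) = P.part (Sum.inr i))

lemma mem_kSet_iff {P : Finpartition (Finset.univ : Finset (Fin n ⊕ Fin n))} (hP : IndepParts P)
    {i : Fin n} : i ∈ kSet P ↔ pairPart i ∈ P.parts := by
  rw [kSet, mem_filter]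
  simp only [mem_univ, true_and]
  constructor
  · intro h
    have h1 : Sum.inl i ∈ P.part (Sum.inl i) := P.mem_part (mem_univ _)
    have h2 : Sum.inr i ∈ P.part (Sum.inl i) := by
      rw [h]; exact P.mem_part (mem_univ _)
    have hp := P.part_mem.2 (mem_univ (Sum.inl i))
    rcases part_classify hP hp with hl | hr | ⟨j, hj⟩
    · exact absurd (hl _ h2) (by simp)
    · exact absurd (hr _ h1) (by simp)
    · rw [hj] at h1 hp
      rw [mem_pairPart] at h1
      obtain rfl : i = j := by rcases h1 with h' | h' <;> simp_all
      exact hp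
  · intro h
    rw [P.part_eq_of_mem h (by rw [mem_pairPart]; exact Or.inl rfl),
      P.part_eq_of_mem h (by rw [mem_pairPart]; exact Or.inr rfl)]

noncomputable def leftProj (p : Finset (Fin n ⊕ Fin n)) : Finset (Fin n) :=
  p.preimage Sum.inl Sum.inl_injective.injOn

noncomputable def rightProj (p : Finset (Fin n ⊕ Fin n)) : Finset (Fin n) :=
  p.preimage Sum.inr Sum.inr_injective.injOn

lemma mem_leftProj {p : Finset (Fin n ⊕ Fin n)} {i : Fin n} :
    i ∈ leftProj p ↔ Sum.inl i ∈ p := Finset.mem_preimage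

lemma mem_rightProj {p : Finset (Fin n ⊕ Fin n)} {i : Fin n} :
    i ∈ rightProj p ↔ Sum.inr i ∈ p := Finset.mem_preimage

lemma image_leftProj {p : Finset (Fin n ⊕ Fin n)} (h : ∀ x ∈ p, x.isLeft) :
    (leftProj p).image Sum.inl = p := by
  ext x
  simp only [mem_image]
  constructor
  · rintro ⟨i, hi, rfl⟩; exact mem_leftProj.1 hi
  · intro hx
    obtain ⟨i, rfl⟩ : ∃ i, x = Sum.inl i := by
      have := h x hx; cases x <;> simp_all
    exact ⟨i, mem_leftProj.2 hx, rfl⟩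

lemma image_rightProj {p : Finset (Fin n ⊕ Fin n)} (h : ∀ x ∈ p, x.isRight) :
    (rightProj p).image Sum.inr = p := by
  ext x
  simp only [mem_image]
  constructor
  · rintro ⟨i, hi, rfl⟩; exact mem_rightProj.1 hi
  · intro hx
    obtain ⟨i, rfl⟩ : ∃ i, x = Sum.inr i := by
      have := h x hx; cases x <;> simp_all
    exact ⟨i, mem_rightProj.2 hx, rfl⟩

noncomputable def fwdQ (P : Finpartition (Finset.univ : Finset (Fin n ⊕ Fin n))) (hP : IndepParts P) :
    Finpartition (kSet P)ᶜ where
  parts := (P.parts.filter (fun p => ∀ x ∈ p, x.isLeft)).image leftProj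
  supIndep := by
    rw [supIndep_iff_pairwiseDisjoint]
    rintro q1 hq1 q2 hq2 hne
    simp only [coe_image, Set.mem_image, mem_coe, mem_filter] at hq1 hq2
    obtain ⟨p1, ⟨hp1, hl1⟩, rfl⟩ := hq1
    obtain ⟨p2, ⟨hp2, hl2⟩, rfl⟩ := hq2
    have hpne : p1 ≠ p2 := by rintro rfl; exact hne rfl
    have hd := P.disjoint hp1 hp2 hpne
    rw [Function.onFun]
    rw [Finset.disjoint_left]
    intro i hi1 hi2
    exact Finset.disjoint_left.1 hd (mem_leftProj.1 hi1) (mem_leftProj.1 hi2)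
  sup_parts := by
    ext i
    rw [Finset.mem_sup, Finset.mem_compl]
    constructor
    · rintro ⟨q, hq, hi⟩
      simp only [mem_image, mem_filter] at hq
      obtain ⟨p, ⟨hp, hl⟩, rfl⟩ := hq
      intro hk
      have hpair := (mem_kSet_iff hP).1 hk
      have hinl : Sum.inl i ∈ p := mem_leftProj.1 hi
      have : p = pairPart i :=
        P.eq_of_mem_parts hp hpair hinl (mem_pairPart.2 (Or.inl rfl))
      have : Sum.inr i ∈ p := this ▸ mem_pairPart.2 (Or.inr rfl)
      exact absurd (hl _ this) (by simp)
    · intro hk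
      have hp := P.part_mem.2 (mem_univ (Sum.inl i))
      have hmem : Sum.inl i ∈ P.part (Sum.inl i) := P.mem_part (mem_univ _)
      rcases part_classify hP hp with hl | hr | ⟨j, hj⟩
      · exact ⟨leftProj _, mem_image_of_mem _ (mem_filter.2 ⟨hp, hl⟩), mem_leftProj.2 hmem⟩
      · exact absurd (hr _ hmem) (by simp)
      · rw [hj] at hmem hp
        rw [mem_pairPart] at hmem
        obtain rfl : i = j := by rcases hmem with h' | h' <;> simp_all
        exact absurd ((mem_kSet_iff hP).2 hp) hk
  bot_notMem := by
    intro h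
    rw [mem_image] at h
    obtain ⟨p, hp, hproj⟩ := h
    rw [mem_filter] at hp
    obtain ⟨x, hx⟩ := P.nonempty_of_mem_parts hp.1
    obtain ⟨i, rfl⟩ : ∃ i, x = Sum.inl i := by
      have := hp.2 x hx; cases x <;> simp_all
    have : i ∈ leftProj p := mem_leftProj.2 hx
    rw [hproj] at this
    exact absurd this (by simp)

noncomputable def fwdR (P : Finpartition (Finset.univ : Finset (Fin n ⊕ Fin n))) (hP : IndepParts P) :
    Finpartition (kSet P)ᶜ where
  parts := (P.parts.filter (fun p => ∀ x ∈ p, x.isRight)).image rightProj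
  supIndep := by
    rw [supIndep_iff_pairwiseDisjoint]
    rintro q1 hq1 q2 hq2 hne
    simp only [coe_image, Set.mem_image, mem_coe, mem_filter] at hq1 hq2
    obtain ⟨p1, ⟨hp1, hl1⟩, rfl⟩ := hq1
    obtain ⟨p2, ⟨hp2, hl2⟩, rfl⟩ := hq2
    have hpne : p1 ≠ p2 := by rintro rfl; exact hne rfl
    have hd := P.disjoint hp1 hp2 hpne
    rw [Function.onFun]
    rw [Finset.disjoint_left]
    intro i hi1 hi2
    exact Finset.disjoint_left.1 hd (mem_rightProj.1 hi1) (mem_rightProj.1 hi2)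
  sup_parts := by
    ext i
    rw [Finset.mem_sup, Finset.mem_compl]
    constructor
    · rintro ⟨q, hq, hi⟩
      simp only [mem_image, mem_filter] at hq
      obtain ⟨p, ⟨hp, hl⟩, rfl⟩ := hq
      intro hk
      have hpair := (mem_kSet_iff hP).1 hk
      have hinr : Sum.inr i ∈ p := mem_rightProj.1 hi
      have : p = pairPart i :=
        P.eq_of_mem_parts hp hpair hinr (mem_pairPart.2 (Or.inr rfl))
      have : Sum.inl i ∈ p := this ▸ mem_pairPart.2 (Or.inl rfl)
      exact absurd (hl _ this) (by simp)
    · intro hk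
      have hp := P.part_mem.2 (mem_univ (Sum.inr i))
      have hmem : Sum.inr i ∈ P.part (Sum.inr i) := P.mem_part (mem_univ _)
      rcases part_classify hP hp with hl | hr | ⟨j, hj⟩
      · exact absurd (hl _ hmem) (by simp)
      · exact ⟨rightProj _, mem_image_of_mem _ (mem_filter.2 ⟨hp, hr⟩), mem_rightProj.2 hmem⟩
      · rw [hj] at hmem hp
        rw [mem_pairPart] at hmem
        obtain rfl : i = j := by rcases hmem with h' | h' <;> simp_all
        exact absurd ((mem_kSet_iff hP).2 hp) hk
  bot_notMem := by
    intro h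
    rw [mem_image] at h
    obtain ⟨p, hp, hproj⟩ := h
    rw [mem_filter] at hp
    obtain ⟨x, hx⟩ := P.nonempty_of_mem_parts hp.1
    obtain ⟨i, rfl⟩ : ∃ i, x = Sum.inr i := by
      have := hp.2 x hx; cases x <;> simp_all
    have : i ∈ rightProj p := mem_rightProj.2 hx
    rw [hproj] at this
    exact absurd this (by simp)

def bwdParts (K : Finset (Fin n)) (Q R : Finpartition Kᶜ) : Finset (Finset (Fin n ⊕ Fin n)) :=
  K.image pairPart ∪ Q.parts.image (Finset.image Sum.inl) ∪ R.parts.image (Finset.image Sum.inr)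

lemma bwd_unique {K : Finset (Fin n)} {Q R : Finpartition Kᶜ}
    {p q : Finset (Fin n ⊕ Fin n)} (hp : p ∈ bwdParts K Q R) (hq : q ∈ bwdParts K Q R)
    {x : Fin n ⊕ Fin n} (hxp : x ∈ p) (hxq : x ∈ q) : p = q := by
  simp only [bwdParts, mem_union, mem_image] at hp hq
  -- characterize membership of x in each kind of part
  have key : ∀ r : Finset (Fin n ⊕ Fin n),
      ((∃ i ∈ K, pairPart i = r) ∨ (∃ a ∈ Q.parts, a.image Sum.inl = r) ∨
        (∃ a ∈ R.parts, a.image Sum.inr = r)) → x ∈ r → p = q → True := fun _ _ _ _ => trivial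
  clear key
  rcases hp with ((⟨i, hi, rfl⟩ | ⟨a, ha, rfl⟩) | ⟨a, ha, rfl⟩) <;>
    rcases hq with ((⟨j, hj, rfl⟩ | ⟨b, hb, rfl⟩) | ⟨b, hb, rfl⟩)
  · -- pair/pair
    rw [mem_pairPart] at hxp hxq
    have : i = j := by
      rcases hxp with rfl | rfl <;> rcases hxq with h | h <;> simp_all
    rw [this]
  · -- pair/inl image
    rw [mem_pairPart] at hxp
    rw [mem_image] at hxq
    obtain ⟨c, hc, hcx⟩ := hxq
    have hcK : c ∈ Kᶜ := Q.le hb hc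
    rcases hxp with rfl | rfl
    · obtain rfl : c = i := by simpa using hcx
      exact absurd hi (mem_compl.1 hcK)
    · exact absurd hcx (by simp)
  · -- pair/inr image
    rw [mem_pairPart] at hxp
    rw [mem_image] at hxq
    obtain ⟨c, hc, hcx⟩ := hxq
    have hcK : c ∈ Kᶜ := R.le hb hc
    rcases hxp with rfl | rfl
    · exact absurd hcx (by simp)
    · obtain rfl : c = i := by simpa using hcx
      exact absurd hi (mem_compl.1 hcK)
  · -- inl image/pair
    rw [mem_pairPart] at hxq
    rw [mem_image] at hxp
    obtain ⟨c, hc, hcx⟩ := hxp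
    have hcK : c ∈ Kᶜ := Q.le ha hc
    rcases hxq with rfl | rfl
    · obtain rfl : c = j := by simpa using hcx
      exact absurd hj (mem_compl.1 hcK)
    · exact absurd hcx (by simp)
  · -- inl/inl
    rw [mem_image] at hxp hxq
    obtain ⟨c, hc, rfl⟩ := hxp
    obtain ⟨d, hd, hdc⟩ := hxq
    obtain rfl : d = c := by simpa using hdc
    rw [Q.eq_of_mem_parts ha hb hc hd]
  · -- inl/inr
    rw [mem_image] at hxp hxq
    obtain ⟨c, hc, rfl⟩ := hxp
    obtain ⟨d, hd, hdc⟩ := hxq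
    exact absurd hdc (by simp)
  · -- inr/pair
    rw [mem_pairPart] at hxq
    rw [mem_image] at hxp
    obtain ⟨c, hc, hcx⟩ := hxp
    have hcK : c ∈ Kᶜ := R.le ha hc
    rcases hxq with rfl | rfl
    · exact absurd hcx (by simp)
    · obtain rfl : c = j := by simpa using hcx
      exact absurd hj (mem_compl.1 hcK)
  · -- inr/inl
    rw [mem_image] at hxp hxq
    obtain ⟨c, hc, rfl⟩ := hxp
    obtain ⟨d, hd, hdc⟩ := hxq
    exact absurd hdc (by simp)
  · -- inr/inr
    rw [mem_image] at hxp hxq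
    obtain ⟨c, hc, rfl⟩ := hxp
    obtain ⟨d, hd, hdc⟩ := hxq
    obtain rfl : d = c := by simpa using hdc
    rw [R.eq_of_mem_parts ha hb hc hd]

def bwd (K : Finset (Fin n)) (Q R : Finpartition Kᶜ) :
    Finpartition (Finset.univ : Finset (Fin n ⊕ Fin n)) where
  parts := bwdParts K Q R
  supIndep := by
    rw [supIndep_iff_pairwiseDisjoint]
    intro p hp q hq hne
    rw [Function.onFun, Finset.disjoint_left]
    intro x hxp hxq
    exact hne (bwd_unique (mem_coe.1 hp) (mem_coe.1 hq) hxp hxq)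
  sup_parts := by
    ext x
    simp only [mem_univ, iff_true]
    rw [Finset.mem_sup]
    cases x with
    | inl i =>
      by_cases hi : i ∈ K
      · exact ⟨pairPart i, by simp [bwdParts, mem_image]; exact Or.inl ⟨i, hi, rfl⟩,
          mem_pairPart.2 (Or.inl rfl)⟩
      · have : i ∈ Kᶜ := mem_compl.2 hi
        rw [← Q.sup_parts, Finset.mem_sup] at this
        obtain ⟨q, hq, hiq⟩ := this
        refine ⟨q.image Sum.inl, ?_, mem_image_of_mem _ hiq⟩
        simp only [bwdParts, mem_union, mem_image]
        exact Or.inl (Or.inr ⟨q, hq, rfl⟩)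
    | inr i =>
      by_cases hi : i ∈ K
      · exact ⟨pairPart i, by simp [bwdParts, mem_image]; exact Or.inl ⟨i, hi, rfl⟩,
          mem_pairPart.2 (Or.inr rfl)⟩
      · have : i ∈ Kᶜ := mem_compl.2 hi
        rw [← R.sup_parts, Finset.mem_sup] at this
        obtain ⟨q, hq, hiq⟩ := this
        refine ⟨q.image Sum.inr, ?_, mem_image_of_mem _ hiq⟩
        simp only [bwdParts, mem_union, mem_image]
        exact Or.inr ⟨q, hq, rfl⟩
  bot_notMem := by
    intro h
    simp only [bwdParts, mem_union, mem_image] at h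
    rcases h with ((⟨i, hi, hp⟩ | ⟨a, ha, hp⟩) | ⟨a, ha, hp⟩)
    · have : Sum.inl i ∈ pairPart i := mem_pairPart.2 (Or.inl rfl)
      rw [hp] at this
      exact absurd this (by simp)
    · obtain ⟨x, hx⟩ := Q.nonempty_of_mem_parts ha
      have : Sum.inl x ∈ a.image (Sum.inl : Fin n → Fin n ⊕ Fin n) := mem_image_of_mem _ hx
      rw [hp] at this
      exact absurd this (by simp)
    · obtain ⟨x, hx⟩ := R.nonempty_of_mem_parts ha
      have : Sum.inr x ∈ a.image (Sum.inr : Fin n → Fin n ⊕ Fin n) := mem_image_of_mem _ hx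
      rw [hp] at this
      exact absurd this (by simp)

lemma bwd_indep (K : Finset (Fin n)) (Q R : Finpartition Kᶜ) : IndepParts (bwd K Q R) := by
  intro p hp a ha b hb
  simp only [bwd, bwdParts, mem_union, mem_image] at hp
  rcases hp with ((⟨i, hi, rfl⟩ | ⟨q, hq, rfl⟩) | ⟨q, hq, rfl⟩)
  · rw [mem_pairPart] at ha hb
    rcases ha with rfl | rfl <;> rcases hb with rfl | rfl
    · exact bmm_adj_inl_inl i i
    · rw [bmm_adj_inl_inr]; simp
    · intro h; rw [SimpleGraph.adj_comm, bmm_adj_inl_inr] at h; simp at h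
    · exact bmm_adj_inr_inr i i
  · rw [mem_image] at ha hb
    obtain ⟨c, _, rfl⟩ := ha
    obtain ⟨d, _, rfl⟩ := hb
    exact bmm_adj_inl_inl c d
  · rw [mem_image] at ha hb
    obtain ⟨c, _, rfl⟩ := ha
    obtain ⟨d, _, rfl⟩ := hb
    exact bmm_adj_inr_inr c d

lemma leftProj_image (q : Finset (Fin n)) : leftProj (q.image Sum.inl) = q := by
  ext i
  rw [mem_leftProj, mem_image]
  constructor
  · rintro ⟨j, hj, hji⟩
    obtain rfl : j = i := by simpa using hji
    exact hj
  · intro h; exact ⟨i, h, rfl⟩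

lemma rightProj_image (q : Finset (Fin n)) : rightProj (q.image Sum.inr) = q := by
  ext i
  rw [mem_rightProj, mem_image]
  constructor
  · rintro ⟨j, hj, hji⟩
    obtain rfl : j = i := by simpa using hji
    exact hj
  · intro h; exact ⟨i, h, rfl⟩

lemma kSet_bwd (K : Finset (Fin n)) (Q R : Finpartition Kᶜ) : kSet (bwd K Q R) = K := by
  ext i
  rw [mem_kSet_iff (bwd_indep K Q R)]
  show pairPart i ∈ bwdParts K Q R ↔ i ∈ K
  simp only [bwdParts, mem_union, mem_image]
  constructor
  · rintro ((⟨j, hj, hij⟩ | ⟨q, hq, hiq⟩) | ⟨q, hq, hiq⟩)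
    · obtain rfl : i = j := by
        have : Sum.inl i ∈ pairPart j := hij ▸ mem_pairPart.2 (Or.inl rfl)
        rw [mem_pairPart] at this
        rcases this with h | h <;> simp_all
      exact hj
    · have : Sum.inr i ∈ q.image Sum.inl := hiq ▸ mem_pairPart.2 (Or.inr rfl)
      exact absurd this (by simp)
    · have : Sum.inl i ∈ q.image Sum.inr := hiq ▸ mem_pairPart.2 (Or.inl rfl)
      exact absurd this (by simp)
  · intro hi
    exact Or.inl (Or.inl ⟨i, hi, rfl⟩)

lemma fwdQ_bwd (K : Finset (Fin n)) (Q R : Finpartition Kᶜ) :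
    (fwdQ (bwd K Q R) (bwd_indep K Q R)).parts = Q.parts := by
  show ((bwdParts K Q R).filter (fun p => ∀ x ∈ p, x.isLeft)).image leftProj = Q.parts
  have hfilter : (bwdParts K Q R).filter (fun p => ∀ x ∈ p, x.isLeft)
      = Q.parts.image (Finset.image Sum.inl) := by
    ext p
    rw [mem_filter]
    simp only [bwdParts, mem_union, mem_image]
    constructor
    · rintro ⟨(⟨i, hi, rfl⟩ | ⟨q, hq, rfl⟩) | ⟨q, hq, rfl⟩, hl⟩
      · exact absurd (hl _ (mem_pairPart.2 (Or.inr rfl))) (by simp)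
      · exact ⟨q, hq, rfl⟩
      · obtain ⟨x, hx⟩ := R.nonempty_of_mem_parts hq
        exact absurd (hl _ (mem_image_of_mem _ hx)) (by simp)
    · rintro ⟨q, hq, rfl⟩
      refine ⟨Or.inl (Or.inr ⟨q, hq, rfl⟩), ?_⟩
      intro x hx
      rw [mem_image] at hx
      obtain ⟨j, _, rfl⟩ := hx
      simp
  rw [hfilter, image_image]
  have : (leftProj ∘ Finset.image Sum.inl : Finset (Fin n) → Finset (Fin n)) = id := by
    funext q; exact leftProj_image q
  rw [this, image_id]

lemma fwdR_bwd (K : Finset (Fin n)) (Q R : Finpartition Kᶜ) :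
    (fwdR (bwd K Q R) (bwd_indep K Q R)).parts = R.parts := by
  show ((bwdParts K Q R).filter (fun p => ∀ x ∈ p, x.isRight)).image rightProj = R.parts
  have hfilter : (bwdParts K Q R).filter (fun p => ∀ x ∈ p, x.isRight)
      = R.parts.image (Finset.image Sum.inr) := by
    ext p
    rw [mem_filter]
    simp only [bwdParts, mem_union, mem_image]
    constructor
    · rintro ⟨(⟨i, hi, rfl⟩ | ⟨q, hq, rfl⟩) | ⟨q, hq, rfl⟩, hl⟩
      · exact absurd (hl _ (mem_pairPart.2 (Or.inl rfl))) (by simp)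
      · obtain ⟨x, hx⟩ := Q.nonempty_of_mem_parts hq
        exact absurd (hl _ (mem_image_of_mem _ hx)) (by simp)
      · exact ⟨q, hq, rfl⟩
    · rintro ⟨q, hq, rfl⟩
      refine ⟨Or.inr ⟨q, hq, rfl⟩, ?_⟩
      intro x hx
      rw [mem_image] at hx
      obtain ⟨j, _, rfl⟩ := hx
      simp
  rw [hfilter, image_image]
  have : (rightProj ∘ Finset.image Sum.inr : Finset (Fin n) → Finset (Fin n)) = id := by
    funext q; exact rightProj_image q
  rw [this, image_id]

lemma bwd_fwd {P : Finpartition (Finset.univ : Finset (Fin n ⊕ Fin n))} (hP : IndepParts P) :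
    (bwd (kSet P) (fwdQ P hP) (fwdR P hP)).parts = P.parts := by
  show bwdParts (kSet P) (fwdQ P hP) (fwdR P hP) = P.parts
  ext p
  simp only [bwdParts, mem_union, mem_image]
  constructor
  · rintro ((⟨i, hi, rfl⟩ | ⟨q, hq, rfl⟩) | ⟨q, hq, rfl⟩)
    · exact (mem_kSet_iff hP).1 hi
    · show q.image Sum.inl ∈ P.parts
      simp only [fwdQ, mem_image, mem_filter] at hq
      obtain ⟨p', ⟨hp', hl⟩, rfl⟩ := hq
      rw [image_leftProj hl]
      exact hp'
    · show q.image Sum.inr ∈ P.parts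
      simp only [fwdR, mem_image, mem_filter] at hq
      obtain ⟨p', ⟨hp', hr⟩, rfl⟩ := hq
      rw [image_rightProj hr]
      exact hp'
  · intro hp
    rcases part_classify hP hp with hl | hr | ⟨i, rfl⟩
    · refine Or.inl (Or.inr ⟨leftProj p, ?_, image_leftProj hl⟩)
      show leftProj p ∈ (P.parts.filter _).image leftProj
      exact mem_image_of_mem _ (mem_filter.2 ⟨hp, hl⟩)
    · refine Or.inr ⟨rightProj p, ?_, image_rightProj hr⟩
      show rightProj p ∈ (P.parts.filter _).image rightProj
      exact mem_image_of_mem _ (mem_filter.2 ⟨hp, hr⟩)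
    · exact Or.inl (Or.inl ⟨i, (mem_kSet_iff hP).2 hp, rfl⟩)

private lemma sigma2_eq {x y : Σ K : Finset (Fin n), Finpartition Kᶜ × Finpartition Kᶜ}
    (h1 : x.1 = y.1) (h2 : x.2.1.parts = y.2.1.parts) (h3 : x.2.2.parts = y.2.2.parts) :
    x = y := by
  obtain ⟨K, Q, R⟩ := x; obtain ⟨K', Q', R'⟩ := y
  cases h1
  cases Finpartition.ext h2
  cases Finpartition.ext h3
  rfl

noncomputable def mainEquiv (n : ℕ) :
    {P : Finpartition (Finset.univ : Finset (Fin n ⊕ Fin n)) // IndepParts P} ≃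
      Σ K : Finset (Fin n), Finpartition Kᶜ × Finpartition Kᶜ where
  toFun x := ⟨kSet x.1, (fwdQ x.1 x.2, fwdR x.1 x.2)⟩
  invFun x := ⟨bwd x.1 x.2.1 x.2.2, bwd_indep _ _ _⟩
  left_inv x := Subtype.ext (Finpartition.ext (bwd_fwd x.2))
  right_inv x := by
    obtain ⟨K, Q, R⟩ := x
    exact sigma2_eq (kSet_bwd K Q R) (fwdQ_bwd K Q R) (fwdR_bwd K Q R)

lemma bell_zero : bell 0 = 1 := rfl

/-- The total number of proper partitions of `H = K_{n,n} − M` into independent sets equals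
`∑_{k=0}^{n} C(n,k)·B(k)²`. -/
theorem bell_bipartiteMinusMatching (n : ℕ) :
    Nat.card {P : Finpartition (Finset.univ : Finset (Fin n ⊕ Fin n)) //
        ∀ p ∈ P.parts, ∀ a ∈ p, ∀ b ∈ p, ¬ (bipartiteMinusMatching n).Adj a b} =
      ∑ k ∈ Finset.range (n + 1), n.choose k * bell k ^ 2 := by
  show Nat.card {P : Finpartition (Finset.univ : Finset (Fin n ⊕ Fin n)) // IndepParts P} = _
  rw [Nat.card_congr (mainEquiv n), Nat.card_eq_fintype_card, Fintype.card_sigma]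
  have h1 : ∀ K : Finset (Fin n),
      Fintype.card (Finpartition Kᶜ × Finpartition Kᶜ) = bell (n - K.card) ^ 2 := by
    intro K
    rw [Fintype.card_prod, ← Nat.card_eq_fintype_card, card_finpartition, card_compl,
      Fintype.card_fin, sq]
  rw [Finset.sum_congr rfl (fun K _ => h1 K), ← Finset.powerset_univ,
    Finset.sum_powerset_apply_card (fun m => bell (n - m) ^ 2)]
  simp only [Finset.card_univ, Fintype.card_fin, smul_eq_mul]
  rw [← Finset.sum_range_reflect]
  refine Finset.sum_congr rfl fun j hj => ?_
  rw [Finset.mem_range] at hj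
  have h2 : n + 1 - 1 - j = n - j := by omega
  rw [h2, Nat.choose_symm (by omega), show n - (n - j) = j by omega]
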